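/- Let N ≥ 4 be an integer, Δθ = 2π/N, and let indices i be taken modulo N. Let b ≥ 0 and ε ≥ 0 be constants, and let Λ : [0,T] → (ZMod N → ℝ) be differentiable such that for all t ∈ [0,T] and all i, Λ̇_i(t) = a_i(t)·(Λ_{i+1}(t) - 2·Λ_i(t) + Λ_{i-1}(t)) + b_i(t)·Λ_i(t) + E_i(t), where a_i(t) ≥ 0, |b_i(t)| ≤ b, and |E_i(t)| ≤ ε. Then for all t ∈ [0,T], max_{0 ≤ i ≤ N-1} |Λ_i(t)| ≤ (max_{0 ≤ i ≤ N-1} |Λ_i(0)|)·e^{b·t} + ε·t·e^{b·t}. -/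

import Mathlib

open Real

/-- Discrete parabolic maximum principle: if
`Λ̇ᵢ = aᵢ(t)(Λ_{i+1} - 2Λᵢ + Λ_{i-1}) + bᵢ(t)Λᵢ + Eᵢ(t)` with `aᵢ ≥ 0`,
`|bᵢ| ≤ b`, `|Eᵢ| ≤ ε`, then
`maxᵢ |Λᵢ(t)| ≤ (maxᵢ |Λᵢ(0)|) e^{bt} + ε t e^{bt}` on `[0, T]`. -/
theorem stmt14 (N : ℕ) [NeZero N] (hN : 4 ≤ N) (Δθ : ℝ) (hΔθ : Δθ = 2 * π / N)
    (T b ε : ℝ) (hb : 0 ≤ b) (hε : 0 ≤ ε)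
    (Λ a bf E : ℝ → ZMod N → ℝ)
    (ha : ∀ t ∈ Set.Icc (0:ℝ) T, ∀ i, 0 ≤ a t i)
    (hbf : ∀ t ∈ Set.Icc (0:ℝ) T, ∀ i, |bf t i| ≤ b)
    (hE : ∀ t ∈ Set.Icc (0:ℝ) T, ∀ i, |E t i| ≤ ε)
    (hode : ∀ t ∈ Set.Icc (0:ℝ) T, ∀ i,
      HasDerivWithinAt (fun s => Λ s i)
        (a t i * (Λ t (i + 1) - 2 * Λ t i + Λ t (i - 1)) + bf t i * Λ t i + E t i)
        (Set.Icc 0 T) t) :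
    ∀ t ∈ Set.Icc (0:ℝ) T,
      Finset.univ.sup' Finset.univ_nonempty (fun i : ZMod N => |Λ t i|) ≤
        Finset.univ.sup' Finset.univ_nonempty (fun i : ZMod N => |Λ 0 i|)
            * Real.exp (b * t)
          + ε * t * Real.exp (b * t) := by
  classical
  set f : ℝ → ℝ := fun s => Finset.univ.sup' Finset.univ_nonempty
    (fun i : ZMod N => |Λ s i|) with hf_def
  have hle : ∀ s (i : ZMod N), |Λ s i| ≤ f s := fun s i =>
    Finset.le_sup' (fun i : ZMod N => |Λ s i|) (Finset.mem_univ i)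
  have hfnonneg : ∀ s, 0 ≤ f s := fun s => le_trans (abs_nonneg _) (hle s 0)
  have hcont : ∀ i : ZMod N, ContinuousOn (fun s => Λ s i) (Set.Icc 0 T) :=
    fun i s hs => (hode s hs i).continuousWithinAt
  have hfcont : ContinuousOn f (Set.Icc (0:ℝ) T) :=
    ContinuousOn.finset_sup'_apply Finset.univ_nonempty (fun i _ => (hcont i).abs)
  have key : ∀ x ∈ Set.Ico (0:ℝ) T, ∀ r, b * f x + ε < r →
      ∃ᶠ z in nhdsWithin x (Set.Ioi x), (z - x)⁻¹ * (f z - f x) < r := by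
    intro x hx r hr
    have hxI : x ∈ Set.Icc (0:ℝ) T := ⟨hx.1, le_of_lt hx.2⟩
    have hr0 : 0 < r := by
      have : 0 ≤ b * f x + ε := add_nonneg (mul_nonneg hb (hfnonneg x)) hε
      linarith
    have hfilter : nhdsWithin x (Set.Ioi x) ≤ nhdsWithin x (Set.Icc 0 T \ {x}) := by
      rw [← nhdsWithin_Ioo_eq_nhdsGT hx.2]
      exact nhdsWithin_mono x (fun z hz =>
        ⟨⟨le_trans hx.1 (le_of_lt hz.1), le_of_lt hz.2⟩, hz.1.ne'⟩)
    have hfilter2 : nhdsWithin x (Set.Ioi x) ≤ nhdsWithin x (Set.Icc 0 T) :=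
      hfilter.trans (nhdsWithin_mono x Set.diff_subset)
    have htends : ∀ i : ZMod N,
        Filter.Tendsto (fun z => Λ z i) (nhdsWithin x (Set.Ioi x)) (nhds (Λ x i)) :=
      fun i => ((hode x hxI i).continuousWithinAt).mono_left hfilter2
    have main : ∀ i : ZMod N,
        ∀ᶠ z in nhdsWithin x (Set.Ioi x), |Λ z i| < f x + r * (z - x) := by
      intro i
      set d : ℝ := a x i * (Λ x (i + 1) - 2 * Λ x i + Λ x (i - 1)) + bf x i * Λ x i + E x i
        with hd_def
      have hslope : Filter.Tendsto (slope (fun s => Λ s i) x)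
          (nhdsWithin x (Set.Ioi x)) (nhds d) :=
        (hasDerivWithinAt_iff_tendsto_slope.mp (hode x hxI i)).mono_left hfilter
      rcases eq_or_lt_of_le (hle x i) with hmax | hlt
      · rcases eq_or_lt_of_le (hfnonneg x) with hM0 | hMpos
        · -- f x = 0
          have hzero : ∀ j : ZMod N, Λ x j = 0 := fun j =>
            abs_eq_zero.mp (le_antisymm (hM0 ▸ hle x j) (abs_nonneg _))
          have hdval : d = E x i := by
            rw [hd_def, hzero i, hzero (i+1), hzero (i-1)]; ring
          have hdr : |d| < r := by
            rw [hdval]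
            have := hE x hxI i
            have hfx : f x = 0 := hM0.symm
            rw [hfx] at hr; linarith
          have hev1 : ∀ᶠ z in nhdsWithin x (Set.Ioi x),
              |slope (fun s => Λ s i) x z| < r := hslope.abs.eventually_lt_const hdr
          filter_upwards [hev1, self_mem_nhdsWithin] with z h1 hz
          have hzx : 0 < z - x := sub_pos.mpr hz
          have heq : |Λ z i| = |slope (fun s => Λ s i) x z| * (z - x) := by
            rw [slope_def_field, abs_div, abs_of_pos hzx,
              div_mul_cancel₀ _ hzx.ne', hzero i, sub_zero]
          rw [heq, ← hM0, zero_add]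
          exact mul_lt_mul_of_pos_right h1 hzx
        · -- f x > 0, i maximizing
          obtain ⟨σ, hσ, hσΛ⟩ : ∃ σ : ℝ, (σ = 1 ∨ σ = -1) ∧ σ * Λ x i = |Λ x i| := by
            rcases abs_choice (Λ x i) with h | h
            · exact ⟨1, Or.inl rfl, by rw [one_mul, h]⟩
            · exact ⟨-1, Or.inr rfl, by rw [h]; ring⟩
          have hσabs : ∀ y : ℝ, |σ * y| = |y| := by
            rcases hσ with h | h <;> intro y <;> simp [h]
          have hσle : ∀ y : ℝ, σ * y ≤ |y| := fun y => le_of_le_of_eq (le_abs_self _) (hσabs y)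
          have h3 : σ * Λ x i = f x := hσΛ.trans hmax
          have hg : HasDerivWithinAt (fun s => σ * Λ s i) (σ * d) (Set.Icc 0 T) x :=
            (hode x hxI i).const_mul σ
          have hσd : σ * d < r := by
            have h1 : σ * Λ x (i + 1) ≤ f x := (hσle _).trans (hle x _)
            have h2 : σ * Λ x (i - 1) ≤ f x := (hσle _).trans (hle x _)
            have hsecond : σ * (Λ x (i + 1) - 2 * Λ x i + Λ x (i - 1)) ≤ 0 := by
              have hexp : σ * (Λ x (i + 1) - 2 * Λ x i + Λ x (i - 1)) =
                  σ * Λ x (i + 1) - 2 * (σ * Λ x i) + σ * Λ x (i - 1) := by ring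
              rw [hexp, h3]; linarith
            have haterm : a x i * (σ * (Λ x (i + 1) - 2 * Λ x i + Λ x (i - 1))) ≤ 0 :=
              mul_nonpos_of_nonneg_of_nonpos (ha x hxI i) hsecond
            have hbterm : σ * (bf x i * Λ x i) ≤ b * f x := by
              calc σ * (bf x i * Λ x i) = bf x i * (σ * Λ x i) := by ring
                _ ≤ |bf x i * (σ * Λ x i)| := le_abs_self _
                _ = |bf x i| * f x := by
                    rw [abs_mul, abs_of_nonneg (h3 ▸ le_of_lt hMpos : (0:ℝ) ≤ σ * Λ x i), h3]
                _ ≤ b * f x := mul_le_mul_of_nonneg_right (hbf x hxI i) (hfnonneg x)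
            have heterm : σ * E x i ≤ ε := (hσle _).trans (hE x hxI i)
            have hexpand : σ * d = a x i * (σ * (Λ x (i + 1) - 2 * Λ x i + Λ x (i - 1)))
                + σ * (bf x i * Λ x i) + σ * E x i := by rw [hd_def]; ring
            rw [hexpand]; linarith
          have hgs : Filter.Tendsto (slope (fun s => σ * Λ s i) x)
              (nhdsWithin x (Set.Ioi x)) (nhds (σ * d)) :=
            (hasDerivWithinAt_iff_tendsto_slope.mp hg).mono_left hfilter
          have hev1 : ∀ᶠ z in nhdsWithin x (Set.Ioi x),
              slope (fun s => σ * Λ s i) x z < r := hgs.eventually_lt_const hσd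
          have hneg : Filter.Tendsto (fun z => -(σ * Λ z i))
              (nhdsWithin x (Set.Ioi x)) (nhds (-(σ * Λ x i))) :=
            ((htends i).const_mul σ).neg
          have hev2 : ∀ᶠ z in nhdsWithin x (Set.Ioi x), -(σ * Λ z i) < f x :=
            hneg.eventually_lt_const (by rw [h3]; linarith)
          filter_upwards [hev1, hev2, self_mem_nhdsWithin] with z h1 h2 hz
          have hzx : 0 < z - x := sub_pos.mpr hz
          have hq : σ * Λ z i < f x + r * (z - x) := by
            rw [slope_def_field, div_lt_iff₀ hzx] at h1
            have := h3
            linarith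
          have hrc : f x < f x + r * (z - x) := by nlinarith
          rw [← hσabs (Λ z i), abs_lt]
          exact ⟨by linarith, hq⟩
      · -- non-maximizing
        have hev := ((htends i).abs).eventually_lt_const hlt
        filter_upwards [hev, self_mem_nhdsWithin] with z h1 hz
        have : 0 < r * (z - x) := mul_pos hr0 (sub_pos.mpr hz)
        linarith
    have hev : ∀ᶠ z in nhdsWithin x (Set.Ioi x), (z - x)⁻¹ * (f z - f x) < r := by
      filter_upwards [Filter.eventually_all.mpr main, self_mem_nhdsWithin] with z hall hz
      have hzx : 0 < z - x := sub_pos.mpr hz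
      rw [inv_mul_lt_iff₀ hzx]
      have hfz : f z < f x + r * (z - x) :=
        (Finset.sup'_lt_iff Finset.univ_nonempty).mpr (fun i _ => hall i)
      linarith
    exact hev.frequently
  intro t ht
  have hG := le_gronwallBound_of_liminf_deriv_right_le (f' := fun x => b * f x + ε)
    hfcont key (le_refl (f 0)) (fun x _ => le_refl _) t ht
  rw [sub_zero] at hG
  refine hG.trans ?_
  have ht0 : 0 ≤ t := ht.1
  have hδ : 0 ≤ f 0 := hfnonneg 0
  rcases eq_or_lt_of_le hb with hb0 | hbpos
  · rw [← hb0]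
    simp [gronwallBound]
    obtain ⟨j, -, hj⟩ := Finset.exists_mem_eq_sup' Finset.univ_nonempty (fun i : ZMod N => |Λ 0 i|)
    exact ⟨j, hj.le⟩
  · rw [gronwallBound_of_K_ne_0 hbpos.ne']
    have key2 : Real.exp (b * t) - 1 ≤ b * t * Real.exp (b * t) := by
      have h1 : 1 - b * t ≤ Real.exp (-(b * t)) := by
        linarith [Real.add_one_le_exp (-(b * t))]
      have h2 : Real.exp (-(b * t)) * Real.exp (b * t) = 1 := by
        rw [← Real.exp_add]; simp
      nlinarith [Real.exp_pos (b * t)]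
    have hεterm : ε / b * (Real.exp (b * t) - 1) ≤ ε * t * Real.exp (b * t) := by
      rw [div_mul_eq_mul_div, div_le_iff₀ hbpos]
      calc ε * (Real.exp (b * t) - 1) ≤ ε * (b * t * Real.exp (b * t)) :=
            mul_le_mul_of_nonneg_left key2 hε
        _ = ε * t * Real.exp (b * t) * b := by ring
    linarith
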